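/- Let (V, E, o, t, inv) be a finite multigraph with ν = #V, let m : E → ℝ^d and α : E → ℝ be 1-forms, and Q : V → ℝ. For θ ∈ ℝ^d let H(θ) = Δ_{m,α}(θ) + Q (a Hermitian operator on ℂ^V) with eigenvalues λ_1(θ) ≤ … ≤ λ_ν(θ) counted with multiplicity. Let E⁰ = {e ∈ E : m(e) = 0}, let H⁰ be the Hermitian operator on ℂ^V given by (H⁰ f)(v) = Σ_{e ∈ E⁰ : o(e) = v} (f(v) − e^{iα(e)} f(t(e))) + Q(v) f(v), with eigenvalues μ_1 ≤ … ≤ μ_ν, and let κ₊^m = max_{v ∈ V} #{e ∈ E : o(e) = v and m(e) ≠ 0}. Then for every θ ∈ ℝ^d and every n ∈ {1,…,ν}: μ_n ≤ λ_n(θ) ≤ μ_n + 2κ₊^m. In particular each spectral band λ_n(ℝ^d) is contained in the interval [μ_n, μ_n + 2κ₊^m]. (Paper: Theorem 2.5(i) at the level of fiber operators.) -/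

import Mathlib

open scoped Classical
open Finset

noncomputable section

/-- The degree of a vertex: the number of oriented edges starting at it. -/
def mdeg {V E : Type} [Fintype E] (o : E → V) (v : V) : ℕ :=
  (Finset.univ.filter fun e => o e = v).card

/-- The combinatorial magnetic Laplacian `Δ_α`. -/
def magLap {V E : Type} [Fintype E] (o t : E → V) (α : E → ℝ)
    (f : V → ℂ) (v : V) : ℂ :=
  ∑ e ∈ Finset.univ.filter (fun e => o e = v),
    (f v - Complex.exp (Complex.I * (α e : ℂ)) * f (t e))

/-- The fiber magnetic Laplacian `Δ_{m,φ}(θ)`. -/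
def fiberLap {V E : Type} [Fintype E] {d : ℕ} (o t : E → V)
    (m : E → Fin d → ℝ) (φ : E → ℝ) (θ : Fin d → ℝ) (f : V → ℂ) (v : V) : ℂ :=
  (mdeg o v : ℂ) * f v -
    ∑ e ∈ Finset.univ.filter (fun e => o e = v),
      Complex.exp (Complex.I * ((φ e + ∑ i, m e i * θ i : ℝ) : ℂ)) * f (t e)

/-- Standard inner product on `ℂ^V` (conjugate-linear in the first argument). -/
def dotC {V : Type} [Fintype V] (f g : V → ℂ) : ℂ :=
  ∑ v, (starRingEnd ℂ) (f v) * g v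

/-- `lam` lists the eigenvalues of the operator `T` on `ℂ^V` in nondecreasing
order, counted with multiplicity (witnessed by an orthonormal eigenbasis). -/
def IsEigList {V : Type} [Fintype V] (T : (V → ℂ) → (V → ℂ))
    (lam : Fin (Fintype.card V) → ℝ) : Prop :=
  Monotone lam ∧ ∃ u : Fin (Fintype.card V) → (V → ℂ),
    (∀ i j, dotC (u i) (u j) = if i = j then (1 : ℂ) else 0) ∧
    ∀ i, T (u i) = fun v => ((lam i : ℝ) : ℂ) * u i v

/-- A closed walk in the multigraph. -/
def IsClosedWalk {V E : Type} (o t : E → V) {k : ℕ} (c : Fin (k + 1) → E) : Prop :=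
  (∀ i : Fin k, t (c i.castSucc) = o (c i.succ)) ∧ t (c (Fin.last k)) = o (c 0)

/-- Two forms have the same flux along every closed walk. -/
def SameFlux {V E W : Type} [AddCommMonoid W] (o t : E → V) (b b' : E → W) : Prop :=
  ∀ (k : ℕ) (c : Fin (k + 1) → E), IsClosedWalk o t c →
    ∑ i, b (c i) = ∑ i, b' (c i)

/-- Connectivity of the multigraph: any two distinct vertices are the endpoints
of some walk. -/
def MGConnected {V E : Type} (o t : E → V) : Prop :=
  ∀ u v : V, u ≠ v → ∃ (k : ℕ) (c : Fin (k + 1) → E),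
    (∀ i : Fin k, t (c i.castSucc) = o (c i.succ)) ∧ o (c 0) = u ∧ t (c (Fin.last k)) = v

/-- The set of fluxes of a form along all closed walks. -/
def fluxSet {V E W : Type} [AddCommMonoid W] (o t : E → V) (b : E → W) : Set W :=
  {w | ∃ (k : ℕ) (c : Fin (k + 1) → E), IsClosedWalk o t c ∧ ∑ i, b (c i) = w}

/-- The number of oriented edges in the support of a form. -/
def suppCard {E : Type} [Fintype E] {W : Type} [Zero W] (b : E → W) : ℕ :=
  (Finset.univ.filter fun e => b e ≠ 0).card

/-- The integer lattice `ℤ^d` inside `ℝ^d`. -/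
def intLattice (d : ℕ) : Set (Fin d → ℝ) :=
  {w | ∀ i, ∃ z : ℤ, w i = (z : ℝ)}


section Helpers

lemma dotC_sum_right {V ι : Type} [Fintype V] (f : V → ℂ) (s : Finset ι) (g : ι → V → ℂ) :
    dotC f (∑ j ∈ s, g j) = ∑ j ∈ s, dotC f (g j) := by
  simp only [dotC, Finset.sum_apply, Finset.mul_sum]
  exact Finset.sum_comm

lemma dotC_smul_right {V : Type} [Fintype V] (f g : V → ℂ) (c : ℂ) :
    dotC f (c • g) = c * dotC f g := by
  simp only [dotC, Pi.smul_apply, smul_eq_mul, Finset.mul_sum]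
  exact Finset.sum_congr rfl fun v _ => by ring

lemma dotC_sum_left {V ι : Type} [Fintype V] (f : V → ℂ) (s : Finset ι) (g : ι → V → ℂ) :
    dotC (∑ j ∈ s, g j) f = ∑ j ∈ s, dotC (g j) f := by
  simp only [dotC, Finset.sum_apply, map_sum, Finset.sum_mul]
  exact Finset.sum_comm

lemma dotC_smul_left {V : Type} [Fintype V] (f g : V → ℂ) (c : ℂ) :
    dotC (c • g) f = (starRingEnd ℂ) c * dotC g f := by
  simp only [dotC, Pi.smul_apply, smul_eq_mul, map_mul, Finset.mul_sum]
  exact Finset.sum_congr rfl fun v _ => by ring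

lemma dotC_zero_right {V : Type} [Fintype V] (f : V → ℂ) : dotC f 0 = 0 := by
  simp [dotC]

lemma dotC_add_right {V : Type} [Fintype V] (f g h : V → ℂ) :
    dotC f (g + h) = dotC f g + dotC f h := by
  simp only [dotC, Pi.add_apply, mul_add]
  exact Finset.sum_add_distrib

lemma dotC_expand {V ι : Type} [Fintype V] [Fintype ι] [DecidableEq ι]
    (w : ι → V → ℂ) (hw : ∀ i j, dotC (w i) (w j) = if i = j then 1 else 0)
    (c d : ι → ℂ) :
    dotC (∑ j, c j • w j) (∑ j, d j • w j) = ∑ j, (starRingEnd ℂ) (c j) * d j := by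
  rw [dotC_sum_left]
  refine Finset.sum_congr rfl fun j _ => ?_
  rw [dotC_smul_left, dotC_sum_right]
  rw [Finset.sum_congr rfl (fun k _ => by rw [dotC_smul_right, hw])]
  simp [mul_ite, Finset.sum_ite_eq]

lemma dotC_expand' {V ι : Type} [Fintype V] [Fintype ι] [DecidableEq ι]
    (w : ι → V → ℂ) (hw : ∀ i j, dotC (w i) (w j) = if i = j then 1 else 0)
    (c : ι → ℂ) (i : ι) :
    dotC (w i) (∑ j, c j • w j) = c i := by
  rw [dotC_sum_right]
  rw [Finset.sum_congr rfl (fun k _ => by rw [dotC_smul_right, hw])]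
  simp [mul_ite, Finset.sum_ite_eq]

/-- Eigenvalue comparison (min-max): if the quadratic form of `A` is dominated by
that of `B`, then the `n`-th eigenvalue of `A` is at most that of `B`. -/
lemma eig_compare {V : Type} [Fintype V]
    (A B : (V → ℂ) →ₗ[ℂ] (V → ℂ))
    (μ lamb : Fin (Fintype.card V) → ℝ) (hμ : Monotone μ) (hlm : Monotone lamb)
    (u w : Fin (Fintype.card V) → (V → ℂ))
    (hu : ∀ i j, dotC (u i) (u j) = if i = j then 1 else 0)
    (hw : ∀ i j, dotC (w i) (w j) = if i = j then 1 else 0)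
    (hAu : ∀ i, A (u i) = ((μ i : ℂ) • u i))
    (hBw : ∀ i, B (w i) = ((lamb i : ℂ) • w i))
    (hAB : ∀ x, (dotC x (A x)).re ≤ (dotC x (B x)).re)
    (n : Fin (Fintype.card V)) : μ n ≤ lamb n := by
  classical
  let S := {j : Fin (Fintype.card V) // j ≤ n}
  let T := {i : Fin (Fintype.card V) // i < n}
  have hcardS : Fintype.card S = n.val + 1 := by
    rw [Fintype.card_subtype,
      show univ.filter (fun j : Fin (Fintype.card V) => j ≤ n) = Finset.Iic n by ext j; simp]
    exact Fin.card_Iic n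
  have hcardT : Fintype.card T = n.val := by
    rw [Fintype.card_subtype,
      show univ.filter (fun j : Fin (Fintype.card V) => j < n) = Finset.Iio n by ext j; simp]
    exact Fin.card_Iio n
  let L : (S → ℂ) →ₗ[ℂ] (T → ℂ) :=
    { toFun := fun a i => ∑ j : S, a j * dotC (u i.val) (w j.val)
      map_add' := by
        intro a b; funext i
        simp [add_mul, Finset.sum_add_distrib]
      map_smul' := by
        intro r a; funext i
        simp [Finset.mul_sum, mul_assoc] }
  have hnotinj : ¬ Function.Injective L := by
    intro h
    have := LinearMap.finrank_le_finrank_of_injective h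
    rw [Module.finrank_fintype_fun_eq_card ℂ, Module.finrank_fintype_fun_eq_card ℂ,
      hcardS, hcardT] at this
    omega
  rw [Function.not_injective_iff] at hnotinj
  obtain ⟨a, b, hab, hne⟩ := hnotinj
  set c : S → ℂ := a - b with hc
  have hc0 : c ≠ 0 := sub_ne_zero.mpr hne
  have hLc : L c = 0 := by rw [hc, map_sub, hab, sub_self]
  set x : V → ℂ := ∑ j : S, c j • w j.val with hxdef
  have hwS : ∀ i j : S, dotC (w i.val) (w j.val) = if i = j then 1 else 0 := by
    intro i j; rw [hw]; simp [Subtype.val_inj]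
  have hux : ∀ i : Fin (Fintype.card V), i < n → dotC (u i) x = 0 := by
    intro i hi
    have := congrFun hLc ⟨i, hi⟩
    simpa [L, hxdef, dotC_sum_right, dotC_smul_right] using this
  have hui : LinearIndependent ℂ u := by
    rw [Fintype.linearIndependent_iff]
    intro g hg i
    have : dotC (u i) (∑ j, g j • u j) = g i := dotC_expand' u hu g i
    rw [hg, dotC_zero_right] at this
    exact this.symm
  have hspan : Submodule.span ℂ (Set.range u) = ⊤ := by
    have : Nonempty (Fin (Fintype.card V)) := ⟨n⟩
    exact hui.span_eq_top_of_card_eq_finrank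
      (by rw [Module.finrank_fintype_fun_eq_card ℂ, Fintype.card_fin])
  have hxmem : x ∈ Submodule.span ℂ (Set.range u) := by rw [hspan]; trivial
  obtain ⟨bb, hbb⟩ := (Submodule.mem_span_range_iff_exists_fun ℂ).mp hxmem
  have hbbval : ∀ i, bb i = dotC (u i) x := by
    intro i; rw [← hbb, dotC_expand' u hu]
  have hbb0 : ∀ i < n, bb i = 0 := fun i hi => by rw [hbbval, hux i hi]
  have hxx : dotC x x = ∑ j : S, (starRingEnd ℂ) (c j) * c j := by
    rw [hxdef]; exact dotC_expand _ hwS c c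
  have hxxu : dotC x x = ∑ i, (starRingEnd ℂ) (bb i) * bb i := by
    rw [← hbb]; exact dotC_expand u hu bb bb
  have hconj : ∀ z : ℂ, ((starRingEnd ℂ) z * z) = (Complex.normSq z : ℂ) :=
    fun z => (Complex.normSq_eq_conj_mul_self (z := z)).symm
  have hN : (dotC x x).re = ∑ j : S, Complex.normSq (c j) := by
    rw [hxx, Complex.re_sum]
    exact Finset.sum_congr rfl fun j _ => by rw [hconj]; simp
  have hNpos : 0 < (dotC x x).re := by
    rw [hN]
    obtain ⟨j, hj⟩ : ∃ j, c j ≠ 0 := by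
      by_contra h; push_neg at h; exact hc0 (funext h)
    exact Finset.sum_pos' (fun j _ => Complex.normSq_nonneg _)
      ⟨j, Finset.mem_univ j, Complex.normSq_pos.mpr hj⟩
  have hBx : dotC x (B x) = ∑ j : S, (Complex.normSq (c j) : ℂ) * (lamb j.val : ℂ) := by
    have : B x = ∑ j : S, (c j * (lamb j.val : ℂ)) • w j.val := by
      rw [hxdef, map_sum]
      refine Finset.sum_congr rfl fun j _ => ?_
      rw [LinearMap.map_smul, hBw, smul_smul]
    rw [hxdef, this, dotC_expand _ hwS]
    refine Finset.sum_congr rfl fun j _ => ?_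
    rw [← mul_assoc, hconj]
  have hAx : dotC x (A x) = ∑ i, (Complex.normSq (bb i) : ℂ) * (μ i : ℂ) := by
    have : A x = ∑ i, (bb i * (μ i : ℂ)) • u i := by
      rw [← hbb, map_sum]
      refine Finset.sum_congr rfl fun i _ => ?_
      rw [LinearMap.map_smul, hAu, smul_smul]
    rw [this, ← hbb, dotC_expand u hu]
    refine Finset.sum_congr rfl fun i _ => ?_
    rw [← mul_assoc, hconj]
  have hBre : (dotC x (B x)).re ≤ lamb n * (dotC x x).re := by
    rw [hBx, Complex.re_sum, hN, Finset.mul_sum]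
    refine Finset.sum_le_sum fun j _ => ?_
    have : ((Complex.normSq (c j) : ℂ) * (lamb j.val : ℂ)).re
        = Complex.normSq (c j) * lamb j.val := by
      rw [← Complex.ofReal_mul]; simp
    rw [this, mul_comm (lamb n)]
    exact mul_le_mul_of_nonneg_left (hlm j.2) (Complex.normSq_nonneg _)
  have hAre : μ n * (dotC x x).re ≤ (dotC x (A x)).re := by
    rw [hAx, Complex.re_sum, hxxu, Complex.re_sum, Finset.mul_sum]
    refine Finset.sum_le_sum fun i _ => ?_
    have h1 : ((Complex.normSq (bb i) : ℂ) * (μ i : ℂ)).re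
        = Complex.normSq (bb i) * μ i := by rw [← Complex.ofReal_mul]; simp
    have h2 : ((starRingEnd ℂ) (bb i) * bb i).re = Complex.normSq (bb i) := by
      rw [hconj]; simp
    rw [h1, h2]
    rcases lt_or_ge i n with hi | hi
    · rw [hbb0 i hi]; simp
    · rw [mul_comm (μ n)]
      exact mul_le_mul_of_nonneg_left (hμ hi) (Complex.normSq_nonneg _)
  have := le_trans hAre (le_trans (hAB x) hBre)
  exact le_of_mul_le_mul_right (by linarith [this]) hNpos

/-- The quadratic form of the fiber Schrödinger operator as an edge sum. -/
lemma quad_fiber {V E : Type} [Fintype V] [Fintype E] {d : ℕ} (o t : E → V)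
    (m : E → Fin d → ℝ) (α : E → ℝ) (θ : Fin d → ℝ) (Q : V → ℝ) (x : V → ℂ) :
    dotC x (fun v => fiberLap o t m α θ x v + (Q v : ℂ) * x v)
      = ∑ e, ((starRingEnd ℂ) (x (o e)) * x (o e)
          - Complex.exp (Complex.I * ((α e + ∑ i, m e i * θ i : ℝ) : ℂ))
              * ((starRingEnd ℂ) (x (o e)) * x (t e)))
        + ∑ v, (Q v : ℂ) * ((starRingEnd ℂ) (x v) * x v) := by
  have key : ∀ v, (starRingEnd ℂ) (x v) * fiberLap o t m α θ x v
      = ∑ e ∈ Finset.univ.filter (fun e => o e = v),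
        ((starRingEnd ℂ) (x (o e)) * x (o e)
          - Complex.exp (Complex.I * ((α e + ∑ i, m e i * θ i : ℝ) : ℂ))
              * ((starRingEnd ℂ) (x (o e)) * x (t e))) := by
    intro v
    have h1 : ((mdeg o v : ℕ) : ℂ) * x v
        = ∑ _e ∈ Finset.univ.filter (fun e => o e = v), x v := by
      rw [Finset.sum_const, nsmul_eq_mul, mdeg]
    rw [fiberLap, h1, ← Finset.sum_sub_distrib, Finset.mul_sum]
    refine Finset.sum_congr rfl fun e he => ?_
    rw [(Finset.mem_filter.mp he).2]; ring
  calc dotC x (fun v => fiberLap o t m α θ x v + (Q v : ℂ) * x v)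
      = ∑ v, ((starRingEnd ℂ) (x v) * fiberLap o t m α θ x v
          + (Q v : ℂ) * ((starRingEnd ℂ) (x v) * x v)) := by
        refine Finset.sum_congr rfl fun v _ => by ring
    _ = ∑ v, (starRingEnd ℂ) (x v) * fiberLap o t m α θ x v
        + ∑ v, (Q v : ℂ) * ((starRingEnd ℂ) (x v) * x v) := Finset.sum_add_distrib
    _ = _ := by
        congr 1
        rw [Finset.sum_congr rfl fun v _ => key v]
        exact Finset.sum_fiberwise univ o _

/-- The quadratic form of the reduced operator as an edge sum. -/
lemma quad_red {V E : Type} [Fintype V] [Fintype E] {d : ℕ} (o t : E → V)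
    (m : E → Fin d → ℝ) (α : E → ℝ) (Q : V → ℝ) (x : V → ℂ) :
    dotC x (fun v => (∑ e ∈ Finset.univ.filter (fun e => o e = v ∧ m e = 0),
          (x v - Complex.exp (Complex.I * (α e : ℂ)) * x (t e))) + (Q v : ℂ) * x v)
      = ∑ e ∈ Finset.univ.filter (fun e => m e = 0),
          ((starRingEnd ℂ) (x (o e)) * x (o e)
            - Complex.exp (Complex.I * (α e : ℂ)) * ((starRingEnd ℂ) (x (o e)) * x (t e)))
        + ∑ v, (Q v : ℂ) * ((starRingEnd ℂ) (x v) * x v) := by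
  have hfilt : ∀ v : V, Finset.univ.filter (fun e => o e = v ∧ m e = 0)
      = (Finset.univ.filter (fun e => m e = 0)).filter (fun e => o e = v) := by
    intro v; ext e; simp [and_comm]
  have key : ∀ v, (starRingEnd ℂ) (x v) * (∑ e ∈ Finset.univ.filter (fun e => o e = v ∧ m e = 0),
        (x v - Complex.exp (Complex.I * (α e : ℂ)) * x (t e)))
      = ∑ e ∈ (Finset.univ.filter (fun e => m e = 0)).filter (fun e => o e = v),
        ((starRingEnd ℂ) (x (o e)) * x (o e)
          - Complex.exp (Complex.I * (α e : ℂ)) * ((starRingEnd ℂ) (x (o e)) * x (t e))) := by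
    intro v
    rw [hfilt, Finset.mul_sum]
    refine Finset.sum_congr rfl fun e he => ?_
    rw [(Finset.mem_filter.mp he).2]; ring
  calc dotC x _
      = ∑ v, ((starRingEnd ℂ) (x v) * (∑ e ∈ Finset.univ.filter (fun e => o e = v ∧ m e = 0),
          (x v - Complex.exp (Complex.I * (α e : ℂ)) * x (t e)))
          + (Q v : ℂ) * ((starRingEnd ℂ) (x v) * x v)) := by
        refine Finset.sum_congr rfl fun v _ => by ring
    _ = _ + ∑ v, (Q v : ℂ) * ((starRingEnd ℂ) (x v) * x v) := Finset.sum_add_distrib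
    _ = _ := by
        congr 1
        rw [Finset.sum_congr rfl fun v _ => key v]
        exact Finset.sum_fiberwise _ o _

lemma absIexp (r : ℝ) : ‖Complex.exp (Complex.I * (r : ℂ))‖ = 1 := by
  rw [Complex.norm_exp]
  simp [Complex.mul_re]

/-- Bounds on the quadratic form of the magnetic part. -/
lemma Rq_bounds {V E : Type} [Fintype V] [Fintype E] {d : ℕ} (o t : E → V) (inv : E → E)
    (hinv : ∀ e, inv (inv e) = e) (hoi : ∀ e, o (inv e) = t e)
    (m : E → Fin d → ℝ) (hm : ∀ e, m (inv e) = - m e) (β : E → ℝ) (x : V → ℂ) :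
    0 ≤ (∑ e ∈ Finset.univ.filter (fun e => m e ≠ 0),
          ((starRingEnd ℂ) (x (o e)) * x (o e)
            - Complex.exp (Complex.I * (β e : ℂ)) * ((starRingEnd ℂ) (x (o e)) * x (t e)))).re
    ∧ (∑ e ∈ Finset.univ.filter (fun e => m e ≠ 0),
          ((starRingEnd ℂ) (x (o e)) * x (o e)
            - Complex.exp (Complex.I * (β e : ℂ)) * ((starRingEnd ℂ) (x (o e)) * x (t e)))).re
        ≤ 2 * ((Finset.univ.sup fun v : V =>
            (Finset.univ.filter fun e => o e = v ∧ m e ≠ 0).card : ℕ) : ℝ)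
          * ∑ v, Complex.normSq (x v) := by
  set F := Finset.univ.filter (fun e : E => m e ≠ 0) with hF
  set κ : ℕ := Finset.univ.sup fun v : V =>
    (Finset.univ.filter fun e => o e = v ∧ m e ≠ 0).card with hκ
  set S1 : ℝ := ∑ e ∈ F, (‖x (o e)‖)^2 with hS1def
  set S2 : ℝ := ∑ e ∈ F,
    (Complex.exp (Complex.I * (β e : ℂ)) * ((starRingEnd ℂ) (x (o e)) * x (t e))).re with hS2def
  have hre : (∑ e ∈ F,
      ((starRingEnd ℂ) (x (o e)) * x (o e)
        - Complex.exp (Complex.I * (β e : ℂ)) * ((starRingEnd ℂ) (x (o e)) * x (t e)))).re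
      = S1 - S2 := by
    rw [Complex.re_sum, hS1def, hS2def, ← Finset.sum_sub_distrib]
    refine Finset.sum_congr rfl fun e _ => ?_
    rw [Complex.sub_re]
    congr 1
    rw [← Complex.normSq_eq_conj_mul_self, Complex.sq_norm]
    simp
  have htermabs : ∀ e : E,
      |(Complex.exp (Complex.I * (β e : ℂ)) * ((starRingEnd ℂ) (x (o e)) * x (t e))).re|
        ≤ ‖x (o e)‖ * ‖x (t e)‖ := by
    intro e
    refine le_trans (Complex.abs_re_le_norm _) ?_
    rw [norm_mul, norm_mul, absIexp, Complex.norm_conj, one_mul]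
  have hswap : ∑ e ∈ F, (‖x (t e)‖)^2 = ∑ e ∈ F, (‖x (o e)‖)^2 := by
    refine Finset.sum_nbij' inv inv ?_ ?_ ?_ ?_ ?_
    · intro e he
      rw [hF, Finset.mem_filter] at he ⊢
      exact ⟨Finset.mem_univ _, by rw [hm]; simpa [neg_eq_zero] using he.2⟩
    · intro e he
      rw [hF, Finset.mem_filter] at he ⊢
      exact ⟨Finset.mem_univ _, by rw [hm]; simpa [neg_eq_zero] using he.2⟩
    · exact fun e _ => hinv e
    · exact fun e _ => hinv e
    · exact fun e _ => by rw [hoi]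
  have habs2 : |S2| ≤ S1 := by
    calc |S2| ≤ ∑ e ∈ F,
        |(Complex.exp (Complex.I * (β e : ℂ)) * ((starRingEnd ℂ) (x (o e)) * x (t e))).re| :=
          Finset.abs_sum_le_sum_abs _ _
      _ ≤ ∑ e ∈ F, ‖x (o e)‖ * ‖x (t e)‖ :=
          Finset.sum_le_sum fun e _ => htermabs e
      _ ≤ ∑ e ∈ F, ((‖x (o e)‖)^2 + (‖x (t e)‖)^2) / 2 :=
          Finset.sum_le_sum fun e _ => by
            nlinarith [sq_nonneg (‖x (o e)‖ - ‖x (t e)‖)]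
      _ = ((∑ e ∈ F, (‖x (o e)‖)^2) + ∑ e ∈ F, (‖x (t e)‖)^2) / 2 := by
          rw [← Finset.sum_add_distrib, Finset.sum_div]
      _ = S1 := by rw [hswap, hS1def]; ring
  have hcardv : ∀ v : V, ((F.filter fun e => o e = v).card : ℝ) ≤ (κ : ℝ) := by
    intro v
    have h1 : F.filter (fun e => o e = v)
        = Finset.univ.filter fun e => o e = v ∧ m e ≠ 0 := by
      rw [hF]; ext e; simp [and_comm]
    rw [h1]
    exact_mod_cast Nat.cast_le.mpr (Finset.le_sup (f := fun v : V =>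
      (Finset.univ.filter fun e => o e = v ∧ m e ≠ 0).card) (Finset.mem_univ v))
  have hS1κ : S1 ≤ (κ : ℝ) * ∑ v, Complex.normSq (x v) := by
    have h1 : S1 = ∑ v, ∑ e ∈ F.filter (fun e => o e = v), (‖x (o e)‖)^2 :=
      (Finset.sum_fiberwise F o _).symm
    rw [h1, Finset.mul_sum]
    refine Finset.sum_le_sum fun v _ => ?_
    have h2 : ∑ e ∈ F.filter (fun e => o e = v), (‖x (o e)‖)^2
        = ((F.filter fun e => o e = v).card : ℝ) * Complex.normSq (x v) := by
      rw [Finset.sum_congr rfl (fun e he => by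
        rw [(Finset.mem_filter.mp he).2, Complex.sq_norm])]
      rw [Finset.sum_const, nsmul_eq_mul]
    rw [h2]
    exact mul_le_mul_of_nonneg_right (hcardv v) (Complex.normSq_nonneg _)
  rw [hre]
  have h2 := le_abs_self S2
  have h3 := neg_abs_le S2
  constructor <;> nlinarith

end Helpers

/-- Band localization: the `n`-th eigenvalue `λ_n(θ)` of the fiber Schrödinger
operator `H(θ) = Δ_{m,α}(θ) + Q` satisfies `μ_n ≤ λ_n(θ) ≤ μ_n + 2κ₊^m`, where
`μ_n` are the eigenvalues of the operator `H⁰` on the graph with the edges in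
the support of `m` deleted, and `κ₊^m` is the maximal degree of the deleted
subgraph. In particular each band `λ_n(ℝ^d)` lies in `[μ_n, μ_n + 2κ₊^m]`. -/
theorem fiber_band_localization
    {V E : Type} [Fintype V] [Fintype E] [Nonempty V] {d : ℕ}
    (o t : E → V) (inv : E → E)
    (hfp : ∀ e, inv e ≠ e) (hinv : ∀ e, inv (inv e) = e)
    (hoi : ∀ e, o (inv e) = t e) (hti : ∀ e, t (inv e) = o e)
    (m : E → Fin d → ℝ) (hm : ∀ e, m (inv e) = - m e)
    (α : E → ℝ) (hα : ∀ e, α (inv e) = - α e)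
    (Q : V → ℝ)
    (lam : (Fin d → ℝ) → Fin (Fintype.card V) → ℝ)
    (hlam : ∀ θ, IsEigList
      (fun f v => fiberLap o t m α θ f v + (Q v : ℂ) * f v) (lam θ))
    (mu : Fin (Fintype.card V) → ℝ)
    (hmu : IsEigList
      (fun f v => (∑ e ∈ Finset.univ.filter (fun e => o e = v ∧ m e = 0),
          (f v - Complex.exp (Complex.I * (α e : ℂ)) * f (t e))) + (Q v : ℂ) * f v) mu) :
    ∀ (θ : Fin d → ℝ) (n : Fin (Fintype.card V)),
      (mu n ≤ lam θ n ∧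
        lam θ n ≤ mu n +
          2 * (Nat.cast (Finset.univ.sup fun v : V =>
            (Finset.univ.filter fun e => o e = v ∧ m e ≠ 0).card) : ℝ)) ∧
      Set.range (fun θ' => lam θ' n) ⊆
        Set.Icc (mu n)
          (mu n + 2 * (Nat.cast (Finset.univ.sup fun v : V =>
            (Finset.univ.filter fun e => o e = v ∧ m e ≠ 0).card) : ℝ)) := by
  classical
  set κ : ℕ := Finset.univ.sup fun v : V =>
    (Finset.univ.filter fun e => o e = v ∧ m e ≠ 0).card with hκ
  suffices key : ∀ (θ : Fin d → ℝ) (n : Fin (Fintype.card V)),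
      mu n ≤ lam θ n ∧ lam θ n ≤ mu n + 2 * (κ : ℝ) by
    intro θ n
    refine ⟨key θ n, ?_⟩
    rintro y ⟨θ', rfl⟩
    exact ⟨(key θ' n).1, (key θ' n).2⟩
  intro θ n
  -- bundled linear operators
  let Hθ : (V → ℂ) →ₗ[ℂ] (V → ℂ) :=
    { toFun := fun f v => fiberLap o t m α θ f v + (Q v : ℂ) * f v
      map_add' := by
        intro f g; funext v
        simp only [fiberLap, Pi.add_apply, mul_add, Finset.sum_add_distrib]
        ring
      map_smul' := by
        intro r f; funext v
        simp only [fiberLap, Pi.smul_apply, smul_eq_mul, RingHom.id_apply]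
        have h1 : ∑ e ∈ Finset.univ.filter (fun e => o e = v),
            Complex.exp (Complex.I * ((α e + ∑ i, m e i * θ i : ℝ) : ℂ)) * (r * f (t e))
            = r * ∑ e ∈ Finset.univ.filter (fun e => o e = v),
              Complex.exp (Complex.I * ((α e + ∑ i, m e i * θ i : ℝ) : ℂ)) * f (t e) := by
          rw [Finset.mul_sum]; exact Finset.sum_congr rfl fun e _ => by ring
        rw [h1]; ring }
  let H0 : (V → ℂ) →ₗ[ℂ] (V → ℂ) :=
    { toFun := fun f v => (∑ e ∈ Finset.univ.filter (fun e => o e = v ∧ m e = 0),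
          (f v - Complex.exp (Complex.I * (α e : ℂ)) * f (t e))) + (Q v : ℂ) * f v
      map_add' := by
        intro f g; funext v
        simp only [Pi.add_apply, mul_add, Finset.sum_add_distrib]
        rw [show ∑ e ∈ Finset.univ.filter (fun e => o e = v ∧ m e = 0),
            (f v + g v - (Complex.exp (Complex.I * (α e : ℂ)) * f (t e)
              + Complex.exp (Complex.I * (α e : ℂ)) * g (t e)))
            = ∑ e ∈ Finset.univ.filter (fun e => o e = v ∧ m e = 0),
              ((f v - Complex.exp (Complex.I * (α e : ℂ)) * f (t e))
                + (g v - Complex.exp (Complex.I * (α e : ℂ)) * g (t e)))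
          from Finset.sum_congr rfl fun e _ => by ring, Finset.sum_add_distrib]
        ring
      map_smul' := by
        intro r f; funext v
        simp only [Pi.smul_apply, smul_eq_mul, RingHom.id_apply]
        rw [show ∑ e ∈ Finset.univ.filter (fun e => o e = v ∧ m e = 0),
            (r * f v - Complex.exp (Complex.I * (α e : ℂ)) * (r * f (t e)))
            = ∑ e ∈ Finset.univ.filter (fun e => o e = v ∧ m e = 0),
              r * (f v - Complex.exp (Complex.I * (α e : ℂ)) * f (t e))
          from Finset.sum_congr rfl fun e _ => by ring, ← Finset.mul_sum]
        ring }
  let B2 : (V → ℂ) →ₗ[ℂ] (V → ℂ) :=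
    H0 + (((2 * (κ : ℝ) : ℝ)) : ℂ) • (LinearMap.id : (V → ℂ) →ₗ[ℂ] (V → ℂ))
  obtain ⟨hlmono, u, huo, hueq⟩ := hlam θ
  obtain ⟨hmmono, w, hwo, hweq⟩ := hmu
  have hHθu : ∀ i, Hθ (u i) = ((lam θ i : ℂ) • u i) := fun i => hueq i
  have hH0w : ∀ i, H0 (w i) = ((mu i : ℂ) • w i) := fun i => hweq i
  have hB2w : ∀ i, B2 (w i) = (((mu i + 2 * (κ : ℝ) : ℝ) : ℂ) • w i) := by
    intro i
    show H0 (w i) + ((2 * (κ : ℝ) : ℝ) : ℂ) • (w i) = _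
    rw [hH0w, ← add_smul]
    norm_cast
  -- splitting of the quadratic form
  have hsplit : ∀ x : V → ℂ, dotC x (Hθ x) = dotC x (H0 x)
      + ∑ e ∈ Finset.univ.filter (fun e => m e ≠ 0),
          ((starRingEnd ℂ) (x (o e)) * x (o e)
            - Complex.exp (Complex.I * ((α e + ∑ i, m e i * θ i : ℝ) : ℂ))
                * ((starRingEnd ℂ) (x (o e)) * x (t e))) := by
    intro x
    have h1 : dotC x (Hθ x) = _ := quad_fiber o t m α θ Q x
    have h2 : dotC x (H0 x) = _ := quad_red o t m α Q x
    rw [h1, h2]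
    have h3 : ∑ e, ((starRingEnd ℂ) (x (o e)) * x (o e)
          - Complex.exp (Complex.I * ((α e + ∑ i, m e i * θ i : ℝ) : ℂ))
              * ((starRingEnd ℂ) (x (o e)) * x (t e)))
        = ∑ e ∈ Finset.univ.filter (fun e => m e = 0),
            ((starRingEnd ℂ) (x (o e)) * x (o e)
              - Complex.exp (Complex.I * ((α e + ∑ i, m e i * θ i : ℝ) : ℂ))
                  * ((starRingEnd ℂ) (x (o e)) * x (t e)))
          + ∑ e ∈ Finset.univ.filter (fun e => m e ≠ 0),
            ((starRingEnd ℂ) (x (o e)) * x (o e)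
              - Complex.exp (Complex.I * ((α e + ∑ i, m e i * θ i : ℝ) : ℂ))
                  * ((starRingEnd ℂ) (x (o e)) * x (t e))) :=
      (Finset.sum_filter_add_sum_filter_not _ _ _).symm
    have h4 : ∑ e ∈ Finset.univ.filter (fun e => m e = 0),
            ((starRingEnd ℂ) (x (o e)) * x (o e)
              - Complex.exp (Complex.I * ((α e + ∑ i, m e i * θ i : ℝ) : ℂ))
                  * ((starRingEnd ℂ) (x (o e)) * x (t e)))
        = ∑ e ∈ Finset.univ.filter (fun e => m e = 0),
            ((starRingEnd ℂ) (x (o e)) * x (o e)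
              - Complex.exp (Complex.I * (α e : ℂ)) * ((starRingEnd ℂ) (x (o e)) * x (t e))) := by
      refine Finset.sum_congr rfl fun e he => ?_
      have hme : m e = 0 := (Finset.mem_filter.mp he).2
      have : (∑ i, m e i * θ i) = 0 :=
        Finset.sum_eq_zero fun i _ => by rw [show m e i = 0 from congrFun hme i, zero_mul]
      rw [this, add_zero]
    rw [h3, h4]
    ring
  have hdotxx : ∀ x : V → ℂ, (dotC x x).re = ∑ v, Complex.normSq (x v) := by
    intro x
    rw [dotC, Complex.re_sum]
    exact Finset.sum_congr rfl fun v _ => by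
      rw [← Complex.normSq_eq_conj_mul_self]; simp
  have hbounds := fun x : V → ℂ =>
    Rq_bounds o t inv hinv hoi m hm (fun e => (α e + ∑ i, m e i * θ i : ℝ)) x
  constructor
  · -- lower bound
    refine eig_compare H0 Hθ mu (lam θ) hmmono hlmono w u hwo huo hH0w hHθu ?_ n
    intro x
    rw [hsplit x, Complex.add_re]
    linarith [(hbounds x).1]
  · -- upper bound
    have hmono2 : Monotone (fun i => mu i + 2 * (κ : ℝ)) := hmmono.add_const _
    have hAB : ∀ x : V → ℂ, (dotC x (Hθ x)).re ≤ (dotC x (B2 x)).re := by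
      intro x
      have hB2x : dotC x (B2 x) = dotC x (H0 x) + ((2 * (κ : ℝ) : ℝ) : ℂ) * dotC x x := by
        show dotC x (H0 x + ((2 * (κ : ℝ) : ℝ) : ℂ) • x) = _
        rw [dotC_add_right, dotC_smul_right]
      rw [hsplit x, hB2x, Complex.add_re, Complex.add_re, Complex.re_ofReal_mul, hdotxx]
      have := (hbounds x).2
      linarith
    exact eig_compare Hθ B2 (lam θ) (fun i => mu i + 2 * (κ : ℝ)) hlmono hmono2 u w
      huo hwo hHθu hB2w hAB n
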